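/- Let ρ ≥ 3 be an integer, let (ρ_0, ρ_1, ρ_2) be a partition of 2ρ with 2 ≤ ρ_0 ≤ ρ_1 ≤ ρ_2 < ρ, and let Υ_0 = {1,...,ρ_0}, Υ_1 = {ρ_0+1,...,ρ_0+ρ_1}, Υ_2 = {ρ_0+ρ_1+1,...,2ρ}. Let Φ be a field and let α = (α_1, ..., α_{2ρ}) ∈ Φ^{2ρ}. Define the 2ρ × 2ρ matrix M_ρ(α) with two block rows of ρ rows each: the first block row is (−V_0 | V_1 | 0) and the second is (−V_0 | 0 | V_2), where V_m = (α_ℓ^i) with i ranging over {0,...,ρ-1} (rows) and ℓ over Υ_m (columns). For m ∈ {0,1,2}, let σ_m(z) = Π_{ℓ ∈ Υ_m} (z − α_ℓ) = Σ_{j=0}^{ρ_m} σ_{m,j} z^{ρ_m − j}, and let E_ρ(α_{Υ_m}) be the (ρ − ρ_m) × ρ matrix whose i-th row (i ∈ {1,...,ρ−ρ_m}) has entries σ_{m,0}, σ_{m,1}, ..., σ_{m,ρ_m} in columns i, i+1, ..., i+ρ_m and zeros elsewhere; define the ρ × ρ matrix S_ρ(α) by stacking E_ρ(α_{Υ_0}),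 E_ρ(α_{Υ_1}), E_ρ(α_{Υ_2}). Then det(M_ρ(α)) ≠ 0 if and only if det(S_ρ(α)) ≠ 0 and, for every m ∈ {0,1,2}, the entries α_ℓ for ℓ ∈ Υ_m are pairwise distinct. -/

import Mathlib

open Polynomial

/-- The index sets `Υ₀, Υ₁, Υ₂` partitioning `{1, …, 2ρ}` (realized here as
`Fin (2ρ)`, 0-indexed): `Υ₀` consists of the first `ρ₀` indices, `Υ₁` of the
next `ρ₁` indices, and `Υ₂` of the remaining indices. -/
def Upsilon (ρ ρ₀ ρ₁ : ℕ) (m : Fin 3) : Finset (Fin (2 * ρ)) :=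
  Finset.univ.filter fun ℓ =>
    ((m : ℕ) = 0 ∧ (ℓ : ℕ) < ρ₀) ∨
    ((m : ℕ) = 1 ∧ ρ₀ ≤ (ℓ : ℕ) ∧ (ℓ : ℕ) < ρ₀ + ρ₁) ∨
    ((m : ℕ) = 2 ∧ ρ₀ + ρ₁ ≤ (ℓ : ℕ))

/-- `ρ_m` for `m ∈ {0,1,2}`. -/
def rhoPart (ρ₀ ρ₁ ρ₂ : ℕ) (m : Fin 3) : ℕ :=
  if (m : ℕ) = 0 then ρ₀ else if (m : ℕ) = 1 then ρ₁ else ρ₂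

/-- `σ_{m,j}`: the coefficient of `z^{ρ_m - j}` in the monic polynomial
`σ_m(z) = ∏_{ℓ ∈ Υ_m} (z - α_ℓ)`. -/
noncomputable def sigmaCoeff {R : Type*} [CommRing R] (ρ ρ₀ ρ₁ ρ₂ : ℕ)
    (α : Fin (2 * ρ) → R) (m : Fin 3) (j : ℕ) : R :=
  (∏ ℓ ∈ Upsilon ρ ρ₀ ρ₁ m, (Polynomial.X - Polynomial.C (α ℓ))).coeff
    (rhoPart ρ₀ ρ₁ ρ₂ m - j)

/-- The `2ρ × 2ρ` matrix `M_ρ(α)` with block rows `(-V₀ | V₁ | 0)` and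
`(-V₀ | 0 | V₂)`, where `V_m = (α_ℓ^i)` with `i ∈ {0,…,ρ-1}` (rows, the
exponent of row `r` being `r % ρ`) and `ℓ ∈ Υ_m` (columns). -/
def Mmat {R : Type*} [CommRing R] (ρ ρ₀ ρ₁ : ℕ) (α : Fin (2 * ρ) → R) :
    Matrix (Fin (2 * ρ)) (Fin (2 * ρ)) R :=
  fun r c =>
    if (c : ℕ) < ρ₀ then -(α c ^ ((r : ℕ) % ρ))
    else if (c : ℕ) < ρ₀ + ρ₁ then
      (if (r : ℕ) < ρ then α c ^ ((r : ℕ) % ρ) else 0)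
    else
      (if ρ ≤ (r : ℕ) then α c ^ ((r : ℕ) % ρ) else 0)

/-- The `ρ × ρ` matrix `S_ρ(α)` obtained by stacking the matrices
`E_ρ(α_{Υ₀})`, `E_ρ(α_{Υ₁})`, `E_ρ(α_{Υ₂})`, where the `i`-th row
(`0`-indexed) of `E_ρ(α_{Υ_m})` carries `σ_{m,0}, …, σ_{m,ρ_m}` in columns
`i, i+1, …, i+ρ_m` and zeros elsewhere. -/
noncomputable def Smat {R : Type*} [CommRing R] (ρ ρ₀ ρ₁ ρ₂ : ℕ)
    (α : Fin (2 * ρ) → R) : Matrix (Fin ρ) (Fin ρ) R :=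
  fun r c =>
    if (r : ℕ) < ρ - ρ₀ then
      (if (r : ℕ) ≤ (c : ℕ) ∧ (c : ℕ) ≤ (r : ℕ) + ρ₀ then
        sigmaCoeff ρ ρ₀ ρ₁ ρ₂ α 0 ((c : ℕ) - (r : ℕ)) else 0)
    else if (r : ℕ) < (ρ - ρ₀) + (ρ - ρ₁) then
      (if (r : ℕ) - (ρ - ρ₀) ≤ (c : ℕ) ∧
          (c : ℕ) ≤ ((r : ℕ) - (ρ - ρ₀)) + ρ₁ then
        sigmaCoeff ρ ρ₀ ρ₁ ρ₂ α 1 ((c : ℕ) - ((r : ℕ) - (ρ - ρ₀))) else 0)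
    else
      (if (r : ℕ) - ((ρ - ρ₀) + (ρ - ρ₁)) ≤ (c : ℕ) ∧
          (c : ℕ) ≤ ((r : ℕ) - ((ρ - ρ₀) + (ρ - ρ₁))) + ρ₂ then
        sigmaCoeff ρ ρ₀ ρ₁ ρ₂ α 2
          ((c : ℕ) - ((r : ℕ) - ((ρ - ρ₀) + (ρ - ρ₁)))) else 0)

namespace Stmt17

lemma mem_U0 {ρ ρ₀ ρ₁ : ℕ} {ℓ : Fin (2*ρ)} :
    ℓ ∈ Upsilon ρ ρ₀ ρ₁ 0 ↔ (ℓ:ℕ) < ρ₀ := by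
  simp [Upsilon]

lemma mem_U1 {ρ ρ₀ ρ₁ : ℕ} {ℓ : Fin (2*ρ)} :
    ℓ ∈ Upsilon ρ ρ₀ ρ₁ 1 ↔ ρ₀ ≤ (ℓ:ℕ) ∧ (ℓ:ℕ) < ρ₀ + ρ₁ := by
  simp [Upsilon]

lemma mem_U2 {ρ ρ₀ ρ₁ : ℕ} {ℓ : Fin (2*ρ)} :
    ℓ ∈ Upsilon ρ ρ₀ ρ₁ 2 ↔ ρ₀ + ρ₁ ≤ (ℓ:ℕ) := by
  simp [Upsilon]

lemma card_filter_Ico {n a b : ℕ} (hb : b ≤ n) (p : ℕ → Prop) [DecidablePred p]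
    (hp : ∀ i < n, (p i ↔ a ≤ i ∧ i < b)) :
    (Finset.univ.filter fun ℓ : Fin n => p (ℓ:ℕ)).card = b - a := by
  rw [Finset.card_filter, Fin.sum_univ_eq_sum_range (fun i => if p i then 1 else 0),
    ← Finset.card_filter]
  have : (Finset.range n).filter p = Finset.Ico a b := by
    ext i
    simp only [Finset.mem_filter, Finset.mem_range, Finset.mem_Ico]
    constructor
    · rintro ⟨hi, hpi⟩; exact (hp i hi).1 hpi
    · intro h; have hi : i < n := lt_of_lt_of_le h.2 hb; exact ⟨hi, (hp i hi).2 h⟩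
  rw [this, Nat.card_Ico]

lemma card_U {ρ ρ₀ ρ₁ ρ₂ : ℕ} (hsum : ρ₀ + ρ₁ + ρ₂ = 2*ρ) (m : Fin 3) :
    (Upsilon ρ ρ₀ ρ₁ m).card = rhoPart ρ₀ ρ₁ ρ₂ m := by
  fin_cases m
  · show (Upsilon ρ ρ₀ ρ₁ 0).card = rhoPart ρ₀ ρ₁ ρ₂ 0
    have : Upsilon ρ ρ₀ ρ₁ 0 = Finset.univ.filter fun ℓ : Fin (2*ρ) => (ℓ:ℕ) < ρ₀ := by
      ext ℓ; rw [mem_U0]; simp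
    have h := card_filter_Ico (n := 2*ρ) (a := 0) (b := ρ₀) (by omega)
      (fun i => i < ρ₀) (fun i _ => by omega)
    rw [this, h]; simp [rhoPart]
  · show (Upsilon ρ ρ₀ ρ₁ 1).card = rhoPart ρ₀ ρ₁ ρ₂ 1
    have : Upsilon ρ ρ₀ ρ₁ 1
        = Finset.univ.filter fun ℓ : Fin (2*ρ) => ρ₀ ≤ (ℓ:ℕ) ∧ (ℓ:ℕ) < ρ₀ + ρ₁ := by
      ext ℓ; rw [mem_U1]; simp
    have h := card_filter_Ico (n := 2*ρ) (a := ρ₀) (b := ρ₀ + ρ₁) (by omega)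
      (fun i => ρ₀ ≤ i ∧ i < ρ₀ + ρ₁) (fun i _ => by omega)
    rw [this, h]; simp [rhoPart]
  · show (Upsilon ρ ρ₀ ρ₁ 2).card = rhoPart ρ₀ ρ₁ ρ₂ 2
    have : Upsilon ρ ρ₀ ρ₁ 2
        = Finset.univ.filter fun ℓ : Fin (2*ρ) => ρ₀ + ρ₁ ≤ (ℓ:ℕ) ∧ (ℓ:ℕ) < 2*ρ := by
      ext ℓ; rw [mem_U2]; simp only [Finset.mem_filter, Finset.mem_univ, true_and]
      have := ℓ.isLt; omega
    have h := card_filter_Ico (n := 2*ρ) (a := ρ₀ + ρ₁) (b := 2*ρ) le_rfl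
      (fun i => ρ₀ + ρ₁ ≤ i ∧ i < 2*ρ) (fun i _ => by omega)
    rw [this, h]; simp [rhoPart]; omega


variable {Φ : Type*} [Field Φ]

lemma sPoly_natDegree {ρ ρ₀ ρ₁ ρ₂ : ℕ} (α : Fin (2*ρ) → Φ) (hsum : ρ₀+ρ₁+ρ₂ = 2*ρ)
    (m : Fin 3) :
    (∏ ℓ ∈ Upsilon ρ ρ₀ ρ₁ m, (X - C (α ℓ))).natDegree = rhoPart ρ₀ ρ₁ ρ₂ m := by
  rw [Polynomial.natDegree_prod_of_monic _ _ fun _ _ => monic_X_sub_C _]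
  simp only [natDegree_X_sub_C]
  rw [Finset.sum_const, smul_eq_mul, mul_one, card_U hsum]

lemma sigmaCoeff_zero {ρ ρ₀ ρ₁ ρ₂ : ℕ} (α : Fin (2*ρ) → Φ) (hsum : ρ₀+ρ₁+ρ₂ = 2*ρ)
    (m : Fin 3) : sigmaCoeff ρ ρ₀ ρ₁ ρ₂ α m 0 = 1 := by
  have hmono : (∏ ℓ ∈ Upsilon ρ ρ₀ ρ₁ m, (X - C (α ℓ))).Monic :=
    monic_prod_of_monic _ _ fun _ _ => monic_X_sub_C _
  have hd := sPoly_natDegree α hsum m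
  have h : sigmaCoeff ρ ρ₀ ρ₁ ρ₂ α m 0
      = (∏ ℓ ∈ Upsilon ρ ρ₀ ρ₁ m, (X - C (α ℓ))).coeff
          ((∏ ℓ ∈ Upsilon ρ ρ₀ ρ₁ m, (X - C (α ℓ))).natDegree) := by
    simp only [sigmaCoeff, Nat.sub_zero, hd]
  rw [h]
  exact hmono.coeff_natDegree

lemma rec_scalar {ρ ρ₀ ρ₁ ρ₂ : ℕ} (α : Fin (2*ρ) → Φ) (hsum : ρ₀+ρ₁+ρ₂ = 2*ρ) (m : Fin 3)
    {ℓ : Fin (2*ρ)} (hℓ : ℓ ∈ Upsilon ρ ρ₀ ρ₁ m) {i : ℕ}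
    (hi : i + rhoPart ρ₀ ρ₁ ρ₂ m < ρ) :
    ∑ j ∈ Finset.range (rhoPart ρ₀ ρ₁ ρ₂ m + 1),
      sigmaCoeff ρ ρ₀ ρ₁ ρ₂ α m j * α ℓ ^ (ρ - 1 - (i+j)) = 0 := by
  set P := rhoPart ρ₀ ρ₁ ρ₂ m with hP
  set p : Polynomial Φ := ∏ ℓ ∈ Upsilon ρ ρ₀ ρ₁ m, (X - C (α ℓ)) with hp
  have hd : p.natDegree = P := sPoly_natDegree α hsum m
  set d := ρ - 1 - i - P with hdd
  have h1 : ∑ j ∈ Finset.range (P+1), sigmaCoeff ρ ρ₀ ρ₁ ρ₂ α m j * α ℓ ^ (ρ-1-(i+j))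
      = ∑ j ∈ Finset.range (P+1), p.coeff (P+1-1-j) * α ℓ ^ (d + (P+1-1-j)) := by
    refine Finset.sum_congr rfl fun j hj => ?_
    rw [Finset.mem_range] at hj
    have h2 : P+1-1-j = P - j := by omega
    have he : ρ-1-(i+j) = d + (P - j) := by omega
    rw [h2, he]; rfl
  rw [h1, Finset.sum_range_reflect (fun k => p.coeff k * α ℓ ^ (d+k)) (P+1)]
  have h2 : ∀ k, p.coeff k * α ℓ ^ (d+k) = α ℓ ^ d * (p.coeff k * α ℓ ^ k) := by
    intro k; rw [pow_add]; ring
  simp only [h2, ← Finset.mul_sum]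
  have h3 : p.eval (α ℓ) = 0 := by
    rw [hp, eval_prod]; exact Finset.prod_eq_zero hℓ (by simp)
  rw [← hd, ← Polynomial.eval_eq_sum_range, h3, mul_zero]


def extend {ρ : ℕ} (t : Fin ρ → Φ) (n : ℕ) : Φ := if h : n < ρ then t ⟨n, h⟩ else 0

lemma extend_lt {ρ : ℕ} (t : Fin ρ → Φ) {n : ℕ} (h : n < ρ) : extend t n = t ⟨n, h⟩ :=
  dif_pos h

lemma rowsum {ρ : ℕ} (t : Fin ρ → Φ) (f : ℕ → Φ) (i k : ℕ) (h : i + k < ρ) :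
    ∑ c : Fin ρ, (if i ≤ (c:ℕ) ∧ (c:ℕ) ≤ i + k then f ((c:ℕ) - i) else 0) * t c
      = ∑ j ∈ Finset.range (k+1), f j * extend t (i + j) := by
  have h1 : ∀ c : Fin ρ,
      (if i ≤ (c:ℕ) ∧ (c:ℕ) ≤ i + k then f ((c:ℕ) - i) else 0) * t c
      = (fun n => if i ≤ n ∧ n ≤ i + k then f (n - i) * extend t n else 0) (c:ℕ) := by
    intro c
    by_cases hc : i ≤ (c:ℕ) ∧ (c:ℕ) ≤ i + k
    · simp only [if_pos hc]
      rw [extend_lt t c.isLt]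
    · simp only [if_neg hc, zero_mul]
  rw [Finset.sum_congr rfl (fun c _ => h1 c),
    Fin.sum_univ_eq_sum_range (fun n => if i ≤ n ∧ n ≤ i + k then f (n - i) * extend t n else 0) ρ]
  rw [← Finset.sum_filter]
  have h2 : (Finset.range ρ).filter (fun n => i ≤ n ∧ n ≤ i + k) = Finset.Ico i (i+k+1) := by
    ext n; simp only [Finset.mem_filter, Finset.mem_range, Finset.mem_Ico]; omega
  rw [h2, Finset.sum_Ico_eq_sum_range]
  have h3 : i + k + 1 - i = k + 1 := by omega
  rw [h3]
  refine Finset.sum_congr rfl fun j hj => ?_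
  have h4 : i + j - i = j := by omega
  rw [h4]

def Usum (ρ ρ₀ ρ₁ : ℕ) (α : Fin (2*ρ) → Φ) (x : Fin (2*ρ) → Φ) (m : Fin 3) (i : ℕ) : Φ :=
  ∑ ℓ ∈ Upsilon ρ ρ₀ ρ₁ m, x ℓ * α ℓ ^ i

lemma sum_split {ρ ρ₀ ρ₁ : ℕ} (f : Fin (2*ρ) → Φ) :
    ∑ ℓ, f ℓ = (∑ ℓ ∈ Upsilon ρ ρ₀ ρ₁ 0, f ℓ) + (∑ ℓ ∈ Upsilon ρ ρ₀ ρ₁ 1, f ℓ)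
      + (∑ ℓ ∈ Upsilon ρ ρ₀ ρ₁ 2, f ℓ) := by
  have hd01 : Disjoint (Upsilon ρ ρ₀ ρ₁ 0) (Upsilon ρ ρ₀ ρ₁ 1) := by
    rw [Finset.disjoint_left]; intro a h0 h1
    rw [mem_U0] at h0; rw [mem_U1] at h1; omega
  have hd012 : Disjoint (Upsilon ρ ρ₀ ρ₁ 0 ∪ Upsilon ρ ρ₀ ρ₁ 1) (Upsilon ρ ρ₀ ρ₁ 2) := by
    rw [Finset.disjoint_left]; intro a h01 h2
    rw [Finset.mem_union, mem_U0, mem_U1] at h01; rw [mem_U2] at h2; omega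
  have hu : Upsilon ρ ρ₀ ρ₁ 0 ∪ Upsilon ρ ρ₀ ρ₁ 1 ∪ Upsilon ρ ρ₀ ρ₁ 2 = Finset.univ := by
    ext ℓ
    simp only [Finset.mem_union, Finset.mem_univ, iff_true, mem_U0, mem_U1, mem_U2]
    omega
  rw [← hu, Finset.sum_union hd012, Finset.sum_union hd01]

lemma Mrow {ρ ρ₀ ρ₁ : ℕ} (α x : Fin (2*ρ) → Φ) (r : Fin (2*ρ)) :
    (Mmat ρ ρ₀ ρ₁ α).mulVec x r =
      if (r:ℕ) < ρ then Usum ρ ρ₀ ρ₁ α x 1 (r:ℕ) - Usum ρ ρ₀ ρ₁ α x 0 (r:ℕ)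
      else Usum ρ ρ₀ ρ₁ α x 2 ((r:ℕ) - ρ) - Usum ρ ρ₀ ρ₁ α x 0 ((r:ℕ) - ρ) := by
  have hr2 := r.isLt
  have hstart : (Mmat ρ ρ₀ ρ₁ α).mulVec x r = ∑ c, Mmat ρ ρ₀ ρ₁ α r c * x c := rfl
  rw [hstart, sum_split]
  by_cases hr : (r:ℕ) < ρ
  · have hmod : (r:ℕ) % ρ = (r:ℕ) := Nat.mod_eq_of_lt hr
    have s0 : ∑ ℓ ∈ Upsilon ρ ρ₀ ρ₁ 0, Mmat ρ ρ₀ ρ₁ α r ℓ * x ℓ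
        = -Usum ρ ρ₀ ρ₁ α x 0 (r:ℕ) := by
      rw [Usum, ← Finset.sum_neg_distrib]
      refine Finset.sum_congr rfl fun ℓ hℓ => ?_
      rw [mem_U0] at hℓ
      rw [Mmat, if_pos hℓ, hmod]; ring
    have s1 : ∑ ℓ ∈ Upsilon ρ ρ₀ ρ₁ 1, Mmat ρ ρ₀ ρ₁ α r ℓ * x ℓ
        = Usum ρ ρ₀ ρ₁ α x 1 (r:ℕ) := by
      rw [Usum]
      refine Finset.sum_congr rfl fun ℓ hℓ => ?_
      rw [mem_U1] at hℓ
      rw [Mmat, if_neg (by omega), if_pos hℓ.2, if_pos hr, hmod]; ring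
    have s2 : ∑ ℓ ∈ Upsilon ρ ρ₀ ρ₁ 2, Mmat ρ ρ₀ ρ₁ α r ℓ * x ℓ = 0 := by
      refine Finset.sum_eq_zero fun ℓ hℓ => ?_
      rw [mem_U2] at hℓ
      rw [Mmat, if_neg (by omega), if_neg (by omega), if_neg (by omega), zero_mul]
    rw [s0, s1, s2, if_pos hr]; ring
  · have hmod : (r:ℕ) % ρ = (r:ℕ) - ρ := by
      rw [Nat.mod_eq_sub_mod (by omega), Nat.mod_eq_of_lt (by omega)]
    have s0 : ∑ ℓ ∈ Upsilon ρ ρ₀ ρ₁ 0, Mmat ρ ρ₀ ρ₁ α r ℓ * x ℓ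
        = -Usum ρ ρ₀ ρ₁ α x 0 ((r:ℕ) - ρ) := by
      rw [Usum, ← Finset.sum_neg_distrib]
      refine Finset.sum_congr rfl fun ℓ hℓ => ?_
      rw [mem_U0] at hℓ
      rw [Mmat, if_pos hℓ, hmod]; ring
    have s1 : ∑ ℓ ∈ Upsilon ρ ρ₀ ρ₁ 1, Mmat ρ ρ₀ ρ₁ α r ℓ * x ℓ = 0 := by
      refine Finset.sum_eq_zero fun ℓ hℓ => ?_
      rw [mem_U1] at hℓ
      rw [Mmat, if_neg (by omega), if_pos hℓ.2, if_neg hr, zero_mul]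
    have s2 : ∑ ℓ ∈ Upsilon ρ ρ₀ ρ₁ 2, Mmat ρ ρ₀ ρ₁ α r ℓ * x ℓ
        = Usum ρ ρ₀ ρ₁ α x 2 ((r:ℕ) - ρ) := by
      rw [Usum]
      refine Finset.sum_congr rfl fun ℓ hℓ => ?_
      rw [mem_U2] at hℓ
      rw [Mmat, if_neg (by omega), if_neg (by omega), if_pos (by omega), hmod]; ring
    rw [s0, s1, s2, if_neg hr]; ring

lemma Mker {ρ ρ₀ ρ₁ : ℕ} (α x : Fin (2*ρ) → Φ) (hρ : 0 < ρ) :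
    (Mmat ρ ρ₀ ρ₁ α).mulVec x = 0 ↔
      ∀ i, i < ρ → (Usum ρ ρ₀ ρ₁ α x 1 i = Usum ρ ρ₀ ρ₁ α x 0 i
        ∧ Usum ρ ρ₀ ρ₁ α x 2 i = Usum ρ ρ₀ ρ₁ α x 0 i) := by
  constructor
  · intro h i hi
    have h1 := congrFun h ⟨i, by omega⟩
    have h2 := congrFun h ⟨ρ + i, by omega⟩
    rw [Mrow] at h1 h2
    simp only [Pi.zero_apply] at h1 h2
    rw [if_pos (show ((⟨i, by omega⟩ : Fin (2*ρ)):ℕ) < ρ from hi)] at h1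
    rw [if_neg (show ¬((⟨ρ + i, by omega⟩ : Fin (2*ρ)):ℕ) < ρ by simp)] at h2
    have e2 : ((⟨ρ + i, by omega⟩ : Fin (2*ρ)):ℕ) - ρ = i := by simp
    rw [e2] at h2
    exact ⟨sub_eq_zero.mp h1, sub_eq_zero.mp h2⟩
  · intro h
    funext r
    rw [Mrow, Pi.zero_apply]
    have hr2 := r.isLt
    split
    · exact sub_eq_zero_of_eq (h (r:ℕ) ‹_›).1
    · exact sub_eq_zero_of_eq (h ((r:ℕ) - ρ) (by omega)).2


lemma rhoPart0 {ρ₀ ρ₁ ρ₂ : ℕ} : rhoPart ρ₀ ρ₁ ρ₂ 0 = ρ₀ := rfl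
lemma rhoPart1 {ρ₀ ρ₁ ρ₂ : ℕ} : rhoPart ρ₀ ρ₁ ρ₂ 1 = ρ₁ := rfl
lemma rhoPart2 {ρ₀ ρ₁ ρ₂ : ℕ} : rhoPart ρ₀ ρ₁ ρ₂ 2 = ρ₂ := rfl

noncomputable def phi (ρ ρ₀ ρ₁ ρ₂ : ℕ) (α : Fin (2*ρ) → Φ) (m : Fin 3) (i : ℕ)
    (t : Fin ρ → Φ) : Φ :=
  ∑ j ∈ Finset.range (rhoPart ρ₀ ρ₁ ρ₂ m + 1),
    sigmaCoeff ρ ρ₀ ρ₁ ρ₂ α m j * extend t (i+j)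

noncomputable def Emat (ρ ρ₀ ρ₁ ρ₂ : ℕ) (α : Fin (2*ρ) → Φ) (m : Fin 3) :
    Matrix (Fin (ρ - rhoPart ρ₀ ρ₁ ρ₂ m)) (Fin ρ) Φ :=
  fun i c => if (i:ℕ) ≤ (c:ℕ) ∧ (c:ℕ) ≤ (i:ℕ) + rhoPart ρ₀ ρ₁ ρ₂ m
    then sigmaCoeff ρ ρ₀ ρ₁ ρ₂ α m ((c:ℕ) - (i:ℕ)) else 0

lemma Erow {ρ ρ₀ ρ₁ ρ₂ : ℕ} (α : Fin (2*ρ) → Φ) (m : Fin 3) (t : Fin ρ → Φ)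
    (i : Fin (ρ - rhoPart ρ₀ ρ₁ ρ₂ m)) :
    (Emat ρ ρ₀ ρ₁ ρ₂ α m).mulVec t i = phi ρ ρ₀ ρ₁ ρ₂ α m (i:ℕ) t := by
  have hi := i.isLt
  have hstart : (Emat ρ ρ₀ ρ₁ ρ₂ α m).mulVec t i
      = ∑ c : Fin ρ, (if (i:ℕ) ≤ (c:ℕ) ∧ (c:ℕ) ≤ (i:ℕ) + rhoPart ρ₀ ρ₁ ρ₂ m
          then sigmaCoeff ρ ρ₀ ρ₁ ρ₂ α m ((c:ℕ) - (i:ℕ)) else 0) * t c := rfl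
  rw [hstart,
    rowsum t (fun j => sigmaCoeff ρ ρ₀ ρ₁ ρ₂ α m j) (i:ℕ) (rhoPart ρ₀ ρ₁ ρ₂ m) (by omega)]
  rfl

lemma Srow {ρ ρ₀ ρ₁ ρ₂ : ℕ} (α : Fin (2*ρ) → Φ)
    (h01 : ρ₀ ≤ ρ₁) (h12 : ρ₁ ≤ ρ₂) (h2 : ρ₂ < ρ) (hsum : ρ₀ + ρ₁ + ρ₂ = 2*ρ)
    (t : Fin ρ → Φ) (r : Fin ρ) :
    (Smat ρ ρ₀ ρ₁ ρ₂ α).mulVec t r =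
      if (r:ℕ) < ρ - ρ₀ then phi ρ ρ₀ ρ₁ ρ₂ α 0 (r:ℕ) t
      else if (r:ℕ) < (ρ-ρ₀)+(ρ-ρ₁) then phi ρ ρ₀ ρ₁ ρ₂ α 1 ((r:ℕ)-(ρ-ρ₀)) t
      else phi ρ ρ₀ ρ₁ ρ₂ α 2 ((r:ℕ)-((ρ-ρ₀)+(ρ-ρ₁))) t := by
  have hr := r.isLt
  have hstart : (Smat ρ ρ₀ ρ₁ ρ₂ α).mulVec t r = ∑ c : Fin ρ, Smat ρ ρ₀ ρ₁ ρ₂ α r c * t c := rfl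
  rw [hstart]
  by_cases hc0 : (r:ℕ) < ρ - ρ₀
  · rw [if_pos hc0]
    have he : ∀ c : Fin ρ, Smat ρ ρ₀ ρ₁ ρ₂ α r c
        = if (r:ℕ) ≤ (c:ℕ) ∧ (c:ℕ) ≤ (r:ℕ) + ρ₀ then
            sigmaCoeff ρ ρ₀ ρ₁ ρ₂ α 0 ((c:ℕ) - (r:ℕ)) else 0 := by
      intro c; simp only [Smat]; rw [if_pos hc0]
    rw [Finset.sum_congr rfl fun c _ => by rw [he c]]
    rw [rowsum t (fun j => sigmaCoeff ρ ρ₀ ρ₁ ρ₂ α 0 j) (r:ℕ) ρ₀ (by omega)]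
    rw [phi, rhoPart0]
  · by_cases hc1 : (r:ℕ) < (ρ-ρ₀)+(ρ-ρ₁)
    · rw [if_neg hc0, if_pos hc1]
      have he : ∀ c : Fin ρ, Smat ρ ρ₀ ρ₁ ρ₂ α r c
          = if (r:ℕ)-(ρ-ρ₀) ≤ (c:ℕ) ∧ (c:ℕ) ≤ ((r:ℕ)-(ρ-ρ₀)) + ρ₁ then
              sigmaCoeff ρ ρ₀ ρ₁ ρ₂ α 1 ((c:ℕ) - ((r:ℕ)-(ρ-ρ₀))) else 0 := by
        intro c; simp only [Smat]; rw [if_neg hc0, if_pos hc1]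
      rw [Finset.sum_congr rfl fun c _ => by rw [he c]]
      rw [rowsum t (fun j => sigmaCoeff ρ ρ₀ ρ₁ ρ₂ α 1 j) ((r:ℕ)-(ρ-ρ₀)) ρ₁ (by omega)]
      rw [phi, rhoPart1]
    · rw [if_neg hc0, if_neg hc1]
      have he : ∀ c : Fin ρ, Smat ρ ρ₀ ρ₁ ρ₂ α r c
          = if (r:ℕ)-((ρ-ρ₀)+(ρ-ρ₁)) ≤ (c:ℕ) ∧ (c:ℕ) ≤ ((r:ℕ)-((ρ-ρ₀)+(ρ-ρ₁))) + ρ₂ then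
              sigmaCoeff ρ ρ₀ ρ₁ ρ₂ α 2 ((c:ℕ) - ((r:ℕ)-((ρ-ρ₀)+(ρ-ρ₁)))) else 0 := by
        intro c; simp only [Smat]; rw [if_neg hc0, if_neg hc1]
      rw [Finset.sum_congr rfl fun c _ => by rw [he c]]
      rw [rowsum t (fun j => sigmaCoeff ρ ρ₀ ρ₁ ρ₂ α 2 j) ((r:ℕ)-((ρ-ρ₀)+(ρ-ρ₁))) ρ₂ (by omega)]
      rw [phi, rhoPart2]

lemma SE {ρ ρ₀ ρ₁ ρ₂ : ℕ} (α : Fin (2*ρ) → Φ)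
    (h01 : ρ₀ ≤ ρ₁) (h12 : ρ₁ ≤ ρ₂) (h2 : ρ₂ < ρ) (hsum : ρ₀ + ρ₁ + ρ₂ = 2*ρ)
    (t : Fin ρ → Φ) :
    (Smat ρ ρ₀ ρ₁ ρ₂ α).mulVec t = 0 ↔
      ∀ m : Fin 3, (Emat ρ ρ₀ ρ₁ ρ₂ α m).mulVec t = 0 := by
  constructor
  · intro h m
    fin_cases m
    · show (Emat ρ ρ₀ ρ₁ ρ₂ α 0).mulVec t = 0
      funext i
      have hi : (i:ℕ) < ρ - ρ₀ := i.isLt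
      rw [Erow, Pi.zero_apply]
      have h1 := congrFun h ⟨(i:ℕ), by omega⟩
      rw [Srow α h01 h12 h2 hsum, Pi.zero_apply] at h1
      rw [if_pos (show (((⟨(i:ℕ), by omega⟩ : Fin ρ)):ℕ) < ρ - ρ₀ from hi)] at h1
      exact h1
    · show (Emat ρ ρ₀ ρ₁ ρ₂ α 1).mulVec t = 0
      funext i
      have hi : (i:ℕ) < ρ - ρ₁ := i.isLt
      rw [Erow, Pi.zero_apply]
      have h1 := congrFun h ⟨(ρ-ρ₀) + (i:ℕ), by omega⟩
      rw [Srow α h01 h12 h2 hsum, Pi.zero_apply] at h1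
      rw [if_neg (show ¬(((⟨(ρ-ρ₀) + (i:ℕ), by omega⟩ : Fin ρ)):ℕ) < ρ - ρ₀ by simp),
        if_pos (show (((⟨(ρ-ρ₀) + (i:ℕ), by omega⟩ : Fin ρ)):ℕ) < (ρ-ρ₀)+(ρ-ρ₁) by
          simp; omega)] at h1
      have e1 : (((⟨(ρ-ρ₀) + (i:ℕ), by omega⟩ : Fin ρ)):ℕ) - (ρ-ρ₀) = (i:ℕ) := by simp
      rw [e1] at h1
      exact h1
    · show (Emat ρ ρ₀ ρ₁ ρ₂ α 2).mulVec t = 0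
      funext i
      have hi : (i:ℕ) < ρ - ρ₂ := i.isLt
      rw [Erow, Pi.zero_apply]
      have h1 := congrFun h ⟨(ρ-ρ₀) + (ρ-ρ₁) + (i:ℕ), by omega⟩
      rw [Srow α h01 h12 h2 hsum, Pi.zero_apply] at h1
      rw [if_neg (show ¬(((⟨(ρ-ρ₀) + (ρ-ρ₁) + (i:ℕ), by omega⟩ : Fin ρ)):ℕ) < ρ - ρ₀ by
          simp; omega),
        if_neg (show ¬(((⟨(ρ-ρ₀) + (ρ-ρ₁) + (i:ℕ), by omega⟩ : Fin ρ)):ℕ) < (ρ-ρ₀)+(ρ-ρ₁) by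
          simp)] at h1
      have e1 : (((⟨(ρ-ρ₀) + (ρ-ρ₁) + (i:ℕ), by omega⟩ : Fin ρ)):ℕ) - ((ρ-ρ₀)+(ρ-ρ₁)) = (i:ℕ) := by
        simp
      rw [e1] at h1
      exact h1
  · intro h
    funext r
    rw [Srow α h01 h12 h2 hsum, Pi.zero_apply]
    have hr := r.isLt
    by_cases hc0 : (r:ℕ) < ρ - ρ₀
    · rw [if_pos hc0]
      have h1 := congrFun (h 0) ⟨(r:ℕ), show (r:ℕ) < ρ - rhoPart ρ₀ ρ₁ ρ₂ 0 from by
        rw [rhoPart0]; exact hc0⟩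
      rw [Erow, Pi.zero_apply] at h1
      exact h1
    · by_cases hc1 : (r:ℕ) < (ρ-ρ₀)+(ρ-ρ₁)
      · rw [if_neg hc0, if_pos hc1]
        have h1 := congrFun (h 1) ⟨(r:ℕ) - (ρ-ρ₀), show (r:ℕ)-(ρ-ρ₀) < ρ - rhoPart ρ₀ ρ₁ ρ₂ 1 from by
          rw [rhoPart1]; omega⟩
        rw [Erow, Pi.zero_apply] at h1
        exact h1
      · rw [if_neg hc0, if_neg hc1]
        have h1 := congrFun (h 2) ⟨(r:ℕ) - ((ρ-ρ₀)+(ρ-ρ₁)),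
          show (r:ℕ)-((ρ-ρ₀)+(ρ-ρ₁)) < ρ - rhoPart ρ₀ ρ₁ ρ₂ 2 from by
            rw [rhoPart2]; omega⟩
        rw [Erow, Pi.zero_apply] at h1
        exact h1


lemma rhoPart_le {ρ₀ ρ₁ ρ₂ : ℕ} (h01 : ρ₀ ≤ ρ₁) (h12 : ρ₁ ≤ ρ₂) (m : Fin 3) :
    rhoPart ρ₀ ρ₁ ρ₂ m ≤ ρ₂ := by
  fin_cases m
  · exact le_trans h01 h12
  · exact h12
  · exact le_rfl

lemma phi_vanish {ρ ρ₀ ρ₁ ρ₂ : ℕ} (α : Fin (2*ρ) → Φ) (hsum : ρ₀ + ρ₁ + ρ₂ = 2*ρ)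
    (m : Fin 3) (x : Fin (2*ρ) → Φ)
    (hU : ∀ e, e < ρ → Usum ρ ρ₀ ρ₁ α x m e = Usum ρ ρ₀ ρ₁ α x 0 e)
    {i : ℕ} (hi : i + rhoPart ρ₀ ρ₁ ρ₂ m < ρ) :
    phi ρ ρ₀ ρ₁ ρ₂ α m i (fun c => Usum ρ ρ₀ ρ₁ α x 0 (ρ-1-(c:ℕ))) = 0 := by
  rw [phi]
  have key : ∀ j ∈ Finset.range (rhoPart ρ₀ ρ₁ ρ₂ m + 1),
      sigmaCoeff ρ ρ₀ ρ₁ ρ₂ α m j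
          * extend (fun c : Fin ρ => Usum ρ ρ₀ ρ₁ α x 0 (ρ-1-(c:ℕ))) (i+j)
      = ∑ ℓ ∈ Upsilon ρ ρ₀ ρ₁ m,
          x ℓ * (sigmaCoeff ρ ρ₀ ρ₁ ρ₂ α m j * α ℓ ^ (ρ-1-(i+j))) := by
    intro j hj
    rw [Finset.mem_range] at hj
    rw [extend_lt _ (show i+j < ρ by omega)]
    show sigmaCoeff ρ ρ₀ ρ₁ ρ₂ α m j * Usum ρ ρ₀ ρ₁ α x 0 (ρ-1-(i+j)) = _
    rw [← hU _ (by omega), Usum, Finset.mul_sum]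
    exact Finset.sum_congr rfl fun ℓ _ => by ring
  rw [Finset.sum_congr rfl key, Finset.sum_comm]
  refine Finset.sum_eq_zero fun ℓ hℓ => ?_
  rw [← Finset.mul_sum, rec_scalar α hsum m hℓ hi, mul_zero]

lemma vanish_of_moments {ρ ρ₀ ρ₁ ρ₂ : ℕ} (α x : Fin (2*ρ) → Φ)
    (h01 : ρ₀ ≤ ρ₁) (h12 : ρ₁ ≤ ρ₂) (h2 : ρ₂ < ρ) (hsum : ρ₀ + ρ₁ + ρ₂ = 2*ρ) (m : Fin 3)
    (hinj : Set.InjOn α ((Upsilon ρ ρ₀ ρ₁ m : Finset (Fin (2*ρ))) : Set (Fin (2*ρ))))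
    (hU : ∀ e, e < ρ → Usum ρ ρ₀ ρ₁ α x m e = 0)
    {k : Fin (2*ρ)} (hk : k ∈ Upsilon ρ ρ₀ ρ₁ m) : x k = 0 := by
  have hcard : (Upsilon ρ ρ₀ ρ₁ m).card = rhoPart ρ₀ ρ₁ ρ₂ m := card_U hsum m
  have hPle : rhoPart ρ₀ ρ₁ ρ₂ m ≤ ρ₂ := rhoPart_le h01 h12 m
  set L := Lagrange.basis (Upsilon ρ ρ₀ ρ₁ m) α k with hL
  have hdeg : L.natDegree < ρ := by
    rw [hL, Lagrange.natDegree_basis hinj hk, hcard]; omega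
  have heval : ∀ ℓ ∈ Upsilon ρ ρ₀ ρ₁ m, L.eval (α ℓ) = if ℓ = k then 1 else 0 := by
    intro ℓ hℓ
    by_cases hlk : ℓ = k
    · rw [if_pos hlk, hlk, hL]; exact Lagrange.eval_basis_self hinj hk
    · rw [if_neg hlk, hL]
      exact Lagrange.eval_basis_of_ne (fun hc => hlk (hc ▸ rfl)) hℓ
  have hstep : x k = ∑ ℓ ∈ Upsilon ρ ρ₀ ρ₁ m, x ℓ * L.eval (α ℓ) := by
    rw [Finset.sum_congr rfl (fun ℓ hℓ => by rw [heval ℓ hℓ])]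
    rw [Finset.sum_congr rfl (fun ℓ _ => mul_ite (ℓ = k) (x ℓ) (1:Φ) 0)]
    simp [Finset.sum_ite_eq', hk]
  rw [hstep,
    Finset.sum_congr rfl fun ℓ _ => by
      rw [Polynomial.eval_eq_sum_range' hdeg (α ℓ), Finset.mul_sum],
    Finset.sum_comm]
  refine Finset.sum_eq_zero fun j hj => ?_
  rw [Finset.mem_range] at hj
  have h1 : ∑ ℓ ∈ Upsilon ρ ρ₀ ρ₁ m, x ℓ * (L.coeff j * α ℓ ^ j)
      = L.coeff j * Usum ρ ρ₀ ρ₁ α x m j := by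
    rw [Usum, Finset.mul_sum]
    exact Finset.sum_congr rfl fun ℓ _ => by ring
  rw [h1, hU j hj, mul_zero]

def wfam (ρ ρ₀ ρ₁ : ℕ) (α : Fin (2*ρ) → Φ) (m : Fin 3)
    (ℓ : {a : Fin (2*ρ) // a ∈ Upsilon ρ ρ₀ ρ₁ m}) : Fin ρ → Φ :=
  fun c => α ℓ.1 ^ (ρ-1-(c:ℕ))

lemma Usum_of_subtype {ρ ρ₀ ρ₁ : ℕ} (α : Fin (2*ρ) → Φ) (m : Fin 3)
    (g : {a : Fin (2*ρ) // a ∈ Upsilon ρ ρ₀ ρ₁ m} → Φ) (e : ℕ) :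
    Usum ρ ρ₀ ρ₁ α
      (fun a => if h : a ∈ Upsilon ρ ρ₀ ρ₁ m then g ⟨a, h⟩ else 0) m e
    = ∑ ℓ : {a : Fin (2*ρ) // a ∈ Upsilon ρ ρ₀ ρ₁ m}, g ℓ * α ℓ.1 ^ e := by
  rw [Usum, ← Finset.sum_attach (Upsilon ρ ρ₀ ρ₁ m)
    (fun a => (if h : a ∈ Upsilon ρ ρ₀ ρ₁ m then g ⟨a, h⟩ else 0) * α a ^ e),
    Finset.univ_eq_attach]
  exact Finset.sum_congr rfl fun ℓ _ => by rw [dif_pos ℓ.2]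

lemma wfam_indep {ρ ρ₀ ρ₁ ρ₂ : ℕ} (α : Fin (2*ρ) → Φ)
    (h01 : ρ₀ ≤ ρ₁) (h12 : ρ₁ ≤ ρ₂) (h2 : ρ₂ < ρ) (hsum : ρ₀ + ρ₁ + ρ₂ = 2*ρ) (m : Fin 3)
    (hinj : Set.InjOn α ((Upsilon ρ ρ₀ ρ₁ m : Finset (Fin (2*ρ))) : Set (Fin (2*ρ)))) :
    LinearIndependent Φ (wfam ρ ρ₀ ρ₁ α m) := by
  rw [Fintype.linearIndependent_iff]
  intro g hg ℓ₀
  set x : Fin (2*ρ) → Φ := fun a => if h : a ∈ Upsilon ρ ρ₀ ρ₁ m then g ⟨a, h⟩ else 0 with hx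
  have hU : ∀ e, e < ρ → Usum ρ ρ₀ ρ₁ α x m e = 0 := by
    intro e he
    have hc := congrFun hg (⟨ρ-1-e, by omega⟩ : Fin ρ)
    rw [Finset.sum_apply] at hc
    rw [hx, Usum_of_subtype]
    rw [show (0 : Fin ρ → Φ) ⟨ρ-1-e, by omega⟩ = 0 from rfl] at hc
    rw [← hc]
    refine Finset.sum_congr rfl fun ℓ _ => ?_
    show g ℓ * α ℓ.1 ^ e = g ℓ * α ℓ.1 ^ (ρ - 1 - (ρ-1-e))
    have he2 : ρ - 1 - (ρ-1-e) = e := by omega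
    rw [he2]
  have := vanish_of_moments α x h01 h12 h2 hsum m hinj hU ℓ₀.2
  rw [hx] at this
  simpa [dif_pos ℓ₀.2] using this


lemma wfam_mem_ker {ρ ρ₀ ρ₁ ρ₂ : ℕ} (α : Fin (2*ρ) → Φ) (hsum : ρ₀ + ρ₁ + ρ₂ = 2*ρ)
    (m : Fin 3) (ℓ : {a : Fin (2*ρ) // a ∈ Upsilon ρ ρ₀ ρ₁ m}) :
    wfam ρ ρ₀ ρ₁ α m ℓ ∈ LinearMap.ker (Emat ρ ρ₀ ρ₁ ρ₂ α m).mulVecLin := by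
  rw [LinearMap.mem_ker]
  funext i
  rw [Matrix.mulVecLin_apply, Pi.zero_apply, Erow, phi]
  have hi := i.isLt
  have key : ∀ j ∈ Finset.range (rhoPart ρ₀ ρ₁ ρ₂ m + 1),
      sigmaCoeff ρ ρ₀ ρ₁ ρ₂ α m j * extend (wfam ρ ρ₀ ρ₁ α m ℓ) ((i:ℕ)+j)
      = sigmaCoeff ρ ρ₀ ρ₁ ρ₂ α m j * α ℓ.1 ^ (ρ-1-((i:ℕ)+j)) := by
    intro j hj
    rw [Finset.mem_range] at hj
    rw [extend_lt _ (show (i:ℕ)+j < ρ by omega)]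
    rfl
  rw [Finset.sum_congr rfl key]
  exact rec_scalar α hsum m ℓ.2 (by omega)

lemma finrank_kerE {ρ ρ₀ ρ₁ ρ₂ : ℕ} (α : Fin (2*ρ) → Φ)
    (h01 : ρ₀ ≤ ρ₁) (h12 : ρ₁ ≤ ρ₂) (h2 : ρ₂ < ρ) (hsum : ρ₀ + ρ₁ + ρ₂ = 2*ρ) (m : Fin 3) :
    Module.finrank Φ (LinearMap.ker (Emat ρ ρ₀ ρ₁ ρ₂ α m).mulVecLin)
      = rhoPart ρ₀ ρ₁ ρ₂ m := by
  have hPle := rhoPart_le h01 h12 m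
  set P := rhoPart ρ₀ ρ₁ ρ₂ m with hP
  have hPρ : P < ρ := by omega
  set A : Matrix (Fin (ρ-P)) (Fin (ρ-P)) Φ :=
    fun i j => Emat ρ ρ₀ ρ₁ ρ₂ α m i (Fin.castLE (by omega) j) with hA
  have hAij : ∀ i j : Fin (ρ-P), A i j =
      if (i:ℕ) ≤ (j:ℕ) ∧ (j:ℕ) ≤ (i:ℕ) + P then
        sigmaCoeff ρ ρ₀ ρ₁ ρ₂ α m ((j:ℕ)-(i:ℕ)) else 0 := by
    intro i j
    rw [hA]
    simp only [Emat, Fin.coe_castLE]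
    rfl
  have hdet : A.det = 1 := by
    have htri : A.BlockTriangular id := by
      intro i j hij
      rw [hAij, if_neg]
      intro hcon
      exact absurd hcon.1 (by simpa using hij)
    rw [Matrix.det_of_upperTriangular htri]
    refine Finset.prod_eq_one fun i _ => ?_
    rw [hAij, if_pos ⟨le_rfl, by omega⟩, Nat.sub_self]
    exact sigmaCoeff_zero α hsum m
  have hAunit : IsUnit A.det := by rw [hdet]; exact isUnit_one
  have hsurj : Function.Surjective (Emat ρ ρ₀ ρ₁ ρ₂ α m).mulVecLin := by
    intro y
    set s := A⁻¹.mulVec y with hs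
    set t : Fin ρ → Φ := fun c => if h : (c:ℕ) < ρ - P then s ⟨(c:ℕ), h⟩ else 0 with ht
    refine ⟨t, ?_⟩
    have hsub : ((Finset.univ : Finset (Fin (ρ-P))).map
        (Fin.castLEEmb (show ρ - P ≤ ρ by omega))) ⊆ Finset.univ := Finset.subset_univ _
    have hET : (Emat ρ ρ₀ ρ₁ ρ₂ α m).mulVecLin t = A.mulVec s := by
      funext i
      rw [Matrix.mulVecLin_apply]
      show ∑ c : Fin ρ, Emat ρ ρ₀ ρ₁ ρ₂ α m i c * t c = ∑ j : Fin (ρ-P), A i j * s j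
      rw [← Finset.sum_subset hsub (fun c _ hc => ?_)]
      · rw [Finset.sum_map]
        refine Finset.sum_congr rfl fun j _ => ?_
        have h1 : t ((Fin.castLEEmb (show ρ - P ≤ ρ by omega)) j) = s j := by
          rw [ht]
          have hj : ((Fin.castLE (show ρ - P ≤ ρ by omega) j : Fin ρ):ℕ) < ρ - P := by
            rw [Fin.coe_castLE]; exact j.isLt
          show (if h : ((Fin.castLE (show ρ - P ≤ ρ by omega) j : Fin ρ):ℕ) < ρ - P
            then s ⟨((Fin.castLE (show ρ - P ≤ ρ by omega) j : Fin ρ):ℕ), h⟩ else 0) = s j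
          rw [dif_pos hj]
          exact congrArg s (Fin.ext (by simp))
        rw [h1]
        rfl
      · have hnc : ¬ ((c:ℕ) < ρ - P) := by
          intro hlt
          exact hc (Finset.mem_map.mpr ⟨⟨(c:ℕ), hlt⟩, Finset.mem_univ _, by
            ext; simp [Fin.castLEEmb]⟩)
        have h2 : t c = 0 := by rw [ht]; exact dif_neg hnc
        rw [h2, mul_zero]
    rw [hET, hs, Matrix.mulVec_mulVec, Matrix.mul_nonsing_inv A hAunit, Matrix.one_mulVec]
  have hrange : Module.finrank Φ (LinearMap.range (Emat ρ ρ₀ ρ₁ ρ₂ α m).mulVecLin)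
      = ρ - P := by
    rw [LinearMap.range_eq_top.mpr hsurj, finrank_top, Module.finrank_pi, Fintype.card_fin]
  have hrn := LinearMap.finrank_range_add_finrank_ker (Emat ρ ρ₀ ρ₁ ρ₂ α m).mulVecLin
  rw [hrange, Module.finrank_pi, Fintype.card_fin] at hrn
  omega

lemma span_eq_ker {ρ ρ₀ ρ₁ ρ₂ : ℕ} (α : Fin (2*ρ) → Φ)
    (h01 : ρ₀ ≤ ρ₁) (h12 : ρ₁ ≤ ρ₂) (h2 : ρ₂ < ρ) (hsum : ρ₀ + ρ₁ + ρ₂ = 2*ρ) (m : Fin 3)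
    (hinj : Set.InjOn α ((Upsilon ρ ρ₀ ρ₁ m : Finset (Fin (2*ρ))) : Set (Fin (2*ρ)))) :
    Submodule.span Φ (Set.range (wfam ρ ρ₀ ρ₁ α m))
      = LinearMap.ker (Emat ρ ρ₀ ρ₁ ρ₂ α m).mulVecLin := by
  have hle : Submodule.span Φ (Set.range (wfam ρ ρ₀ ρ₁ α m))
      ≤ LinearMap.ker (Emat ρ ρ₀ ρ₁ ρ₂ α m).mulVecLin := by
    rw [Submodule.span_le]
    rintro _ ⟨ℓ, rfl⟩
    exact wfam_mem_ker α hsum m ℓ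
  refine Submodule.eq_of_le_of_finrank_le hle ?_
  rw [finrank_kerE α h01 h12 h2 hsum m,
    finrank_span_eq_card (wfam_indep α h01 h12 h2 hsum m hinj),
    Fintype.card_coe, card_U hsum m]


lemma U_disj {ρ ρ₀ ρ₁ : ℕ} {m m' : Fin 3} (hne : m ≠ m') {a : Fin (2*ρ)}
    (h1 : a ∈ Upsilon ρ ρ₀ ρ₁ m) (h2 : a ∈ Upsilon ρ ρ₀ ρ₁ m') : False := by
  rw [Upsilon, Finset.mem_filter] at h1 h2
  have hv : (m:ℕ) ≠ (m':ℕ) := fun h => hne (Fin.ext h)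
  have hd1 := h1.2
  have hd2 := h2.2
  omega

lemma Usum_eq_apply {ρ ρ₀ ρ₁ : ℕ} (α : Fin (2*ρ) → Φ) (m : Fin 3)
    (g : {a : Fin (2*ρ) // a ∈ Upsilon ρ ρ₀ ρ₁ m} → Φ) (x : Fin (2*ρ) → Φ)
    (hx : ∀ a (h : a ∈ Upsilon ρ ρ₀ ρ₁ m), x a = g ⟨a, h⟩)
    {e : ℕ} (he : e < ρ) (t : Fin ρ → Φ)
    (hgt : ∑ ℓ, g ℓ • wfam ρ ρ₀ ρ₁ α m ℓ = t) :
    Usum ρ ρ₀ ρ₁ α x m e = t ⟨ρ-1-e, by omega⟩ := by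
  have h1 : Usum ρ ρ₀ ρ₁ α x m e
      = ∑ ℓ : {a : Fin (2*ρ) // a ∈ Upsilon ρ ρ₀ ρ₁ m}, g ℓ * α ℓ.1 ^ e := by
    rw [Usum, ← Finset.sum_attach (Upsilon ρ ρ₀ ρ₁ m) (fun a => x a * α a ^ e),
      Finset.univ_eq_attach]
    exact Finset.sum_congr rfl fun ℓ _ => by rw [hx ℓ.1 ℓ.2]
  have h2 := congrFun hgt (⟨ρ-1-e, by omega⟩ : Fin ρ)
  rw [Finset.sum_apply] at h2
  rw [h1, ← h2]
  refine Finset.sum_congr rfl fun ℓ _ => ?_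
  show g ℓ * α ℓ.1 ^ e = g ℓ * α ℓ.1 ^ (ρ - 1 - (ρ-1-e))
  have he2 : ρ - 1 - (ρ-1-e) = e := by omega
  rw [he2]

end Stmt17

open Stmt17 in
/-- Theorem `Sylvester`: for a field `Φ` and
`α ∈ Φ^{2ρ}`, `det(M_ρ(α)) ≠ 0` if and only if `det(S_ρ(α)) ≠ 0` and, for
each `m ∈ {0,1,2}`, the entries `α_ℓ`, `ℓ ∈ Υ_m`, are pairwise distinct. -/
theorem stmt17 {Φ : Type*} [Field Φ] (ρ ρ₀ ρ₁ ρ₂ : ℕ)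
    (hρ : 3 ≤ ρ) (h0 : 2 ≤ ρ₀) (h01 : ρ₀ ≤ ρ₁) (h12 : ρ₁ ≤ ρ₂)
    (h2 : ρ₂ < ρ) (hsum : ρ₀ + ρ₁ + ρ₂ = 2 * ρ)
    (α : Fin (2 * ρ) → Φ) :
    (Mmat ρ ρ₀ ρ₁ α).det ≠ 0 ↔
      ((Smat ρ ρ₀ ρ₁ ρ₂ α).det ≠ 0 ∧
        ∀ m : Fin 3, Set.InjOn α (Upsilon ρ ρ₀ ρ₁ m : Set (Fin (2 * ρ)))) := by
  classical
  constructor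
  · intro hM
    have hMinj : ∀ x : Fin (2*ρ) → Φ, (Mmat ρ ρ₀ ρ₁ α).mulVec x = 0 → x = 0 := by
      intro x hx
      by_contra hxne
      exact hM (Matrix.exists_mulVec_eq_zero_iff.mp ⟨x, hxne, hx⟩)
    have hdist : ∀ m : Fin 3, Set.InjOn α (Upsilon ρ ρ₀ ρ₁ m : Set (Fin (2*ρ))) := by
      intro m k hk l hl hkl
      by_contra hne
      rw [Finset.mem_coe] at hk hl
      set x : Fin (2*ρ) → Φ := fun a => if a = k then 1 else if a = l then -1 else 0 with hxd
      have hxm : ∀ m' : Fin 3, ∀ e : ℕ, Usum ρ ρ₀ ρ₁ α x m' e = 0 := by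
        intro m' e
        by_cases hmm : m' = m
        · subst hmm
          rw [Usum, Finset.sum_eq_add_of_mem k l hk hl hne ?hrest]
          · have hxk : x k = 1 := if_pos rfl
            have hxl : x l = -1 := by
              rw [hxd]
              show (if l = k then (1:Φ) else if l = l then -1 else 0) = -1
              rw [if_neg (fun h => hne h.symm), if_pos rfl]
            rw [hxk, hxl, hkl]
            ring
          · intro c _ hc
            have hck : x c = 0 := by
              rw [hxd]
              show (if c = k then (1:Φ) else if c = l then -1 else 0) = 0
              rw [if_neg hc.1, if_neg hc.2]
            rw [hck, zero_mul]
        · rw [Usum]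
          refine Finset.sum_eq_zero fun a ha => ?_
          have hak : a ≠ k := fun h => U_disj hmm ha (by rw [h]; exact hk)
          have hal : a ≠ l := fun h => U_disj hmm ha (by rw [h]; exact hl)
          have hz : x a = 0 := by
            rw [hxd]
            show (if a = k then (1:Φ) else if a = l then -1 else 0) = 0
            rw [if_neg hak, if_neg hal]
          rw [hz, zero_mul]
      have hx0 : (Mmat ρ ρ₀ ρ₁ α).mulVec x = 0 := by
        rw [Mker α x (by omega)]
        intro i hi
        rw [hxm 0, hxm 1, hxm 2]
        exact ⟨rfl, rfl⟩
      have := hMinj x hx0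
      have hk1 : x k = 1 := if_pos rfl
      rw [this] at hk1
      simpa using hk1
    refine ⟨?_, hdist⟩
    intro hS0
    obtain ⟨t, htne, hSt⟩ := Matrix.exists_mulVec_eq_zero_iff.mpr hS0
    have hE := (SE α h01 h12 h2 hsum t).mp hSt
    have ht_mem : ∀ m : Fin 3, t ∈ Submodule.span Φ (Set.range (wfam ρ ρ₀ ρ₁ α m)) := by
      intro m
      rw [span_eq_ker α h01 h12 h2 hsum m (hdist m)]
      exact LinearMap.mem_ker.mpr (by rw [Matrix.mulVecLin_apply]; exact hE m)
    obtain ⟨g0, hg0⟩ := Submodule.mem_span_range_iff_exists_fun Φ |>.mp (ht_mem 0)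
    obtain ⟨g1, hg1⟩ := Submodule.mem_span_range_iff_exists_fun Φ |>.mp (ht_mem 1)
    obtain ⟨g2, hg2⟩ := Submodule.mem_span_range_iff_exists_fun Φ |>.mp (ht_mem 2)
    set x : Fin (2*ρ) → Φ := fun a =>
      if h : a ∈ Upsilon ρ ρ₀ ρ₁ 0 then g0 ⟨a, h⟩
      else if h : a ∈ Upsilon ρ ρ₀ ρ₁ 1 then g1 ⟨a, h⟩
      else if h : a ∈ Upsilon ρ ρ₀ ρ₁ 2 then g2 ⟨a, h⟩
      else 0 with hxd
    have hx0 : ∀ a (h : a ∈ Upsilon ρ ρ₀ ρ₁ 0), x a = g0 ⟨a, h⟩ := fun a h => dif_pos h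
    have hx1 : ∀ a (h : a ∈ Upsilon ρ ρ₀ ρ₁ 1), x a = g1 ⟨a, h⟩ := by
      intro a h
      rw [hxd]
      show dite _ _ _ = _
      rw [dif_neg (fun h' => U_disj (by decide) h h'), dif_pos h]
    have hx2 : ∀ a (h : a ∈ Upsilon ρ ρ₀ ρ₁ 2), x a = g2 ⟨a, h⟩ := by
      intro a h
      rw [hxd]
      show dite _ _ _ = _
      rw [dif_neg (fun h' => U_disj (by decide) h h'),
        dif_neg (fun h' => U_disj (by decide) h h'), dif_pos h]
    have hMx : (Mmat ρ ρ₀ ρ₁ α).mulVec x = 0 := by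
      rw [Mker α x (by omega)]
      intro i hi
      rw [Usum_eq_apply α 0 g0 x hx0 hi t hg0,
        Usum_eq_apply α 1 g1 x hx1 hi t hg1,
        Usum_eq_apply α 2 g2 x hx2 hi t hg2]
      exact ⟨rfl, rfl⟩
    have hxz := hMinj x hMx
    have hg0z : ∀ ℓ, g0 ℓ = 0 := by
      intro ℓ
      have := hx0 ℓ.1 ℓ.2
      rw [hxz] at this
      exact this.symm
    have ht0 : t = 0 := by
      rw [← hg0]
      refine Finset.sum_eq_zero fun ℓ _ => ?_
      rw [hg0z ℓ, zero_smul]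
    exact htne ht0
  · rintro ⟨hS, hdist⟩
    intro hM0
    obtain ⟨x, hxne, hx⟩ := Matrix.exists_mulVec_eq_zero_iff.mpr hM0
    have hU := (Mker α x (by omega)).mp hx
    set t : Fin ρ → Φ := fun c => Usum ρ ρ₀ ρ₁ α x 0 (ρ-1-(c:ℕ)) with htd
    have hUm : ∀ m : Fin 3, ∀ e, e < ρ →
        Usum ρ ρ₀ ρ₁ α x m e = Usum ρ ρ₀ ρ₁ α x 0 e := by
      intro m e he
      fin_cases m
      · rfl
      · exact (hU e he).1
      · exact (hU e he).2
    have hEt : ∀ m : Fin 3, (Emat ρ ρ₀ ρ₁ ρ₂ α m).mulVec t = 0 := by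
      intro m
      funext i
      rw [Erow, Pi.zero_apply, htd]
      have hi := i.isLt
      have hPle := rhoPart_le h01 h12 m
      exact phi_vanish α hsum m x (hUm m) (by omega)
    have hSt : (Smat ρ ρ₀ ρ₁ ρ₂ α).mulVec t = 0 := (SE α h01 h12 h2 hsum t).mpr hEt
    have ht0 : t = 0 := by
      by_contra htne
      exact hS (Matrix.exists_mulVec_eq_zero_iff.mp ⟨t, htne, hSt⟩)
    have hU0 : ∀ e, e < ρ → Usum ρ ρ₀ ρ₁ α x 0 e = 0 := by
      intro e he
      have h3 : Usum ρ ρ₀ ρ₁ α x 0 (ρ-1-(ρ-1-e)) = 0 := congrFun ht0 ⟨ρ-1-e, by omega⟩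
      have he2 : ρ-1-(ρ-1-e) = e := by omega
      rwa [he2] at h3
    have hUz : ∀ m : Fin 3, ∀ e, e < ρ → Usum ρ ρ₀ ρ₁ α x m e = 0 := by
      intro m e he
      rw [hUm m e he]
      exact hU0 e he
    have hxz : ∀ a : Fin (2*ρ), x a = 0 := by
      intro a
      have hcov : a ∈ Upsilon ρ ρ₀ ρ₁ 0 ∨ a ∈ Upsilon ρ ρ₀ ρ₁ 1 ∨ a ∈ Upsilon ρ ρ₀ ρ₁ 2 := by
        rw [mem_U0, mem_U1, mem_U2]
        omega
      rcases hcov with h|h|h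
      · exact vanish_of_moments α x h01 h12 h2 hsum 0 (hdist 0) (hUz 0) h
      · exact vanish_of_moments α x h01 h12 h2 hsum 1 (hdist 1) (hUz 1) h
      · exact vanish_of_moments α x h01 h12 h2 hsum 2 (hdist 2) (hUz 2) h
    exact hxne (funext hxz)
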